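/- arXiv:2209.15429 — 2 statements merged into one kernel-verified Lean document; each statement's English description precedes it below -/
import Mathlib

section
/- For all q in (1/2, 1) and all z in [1/2, q]: (h'(q)/h'''(q))·(h''(z) - h''(q)) ≤ h(z) - h(q), where h is the binary entropy function. -/
noncomputable def h (x : ℝ) : ℝ := -x * Real.log x - (1-x) * Real.log (1-x)

lemma hasDerivAt_xlogx {x : ℝ} (hx : x ≠ 0) :
    HasDerivAt (fun y : ℝ => y * Real.log y) (Real.log x + 1) x := by
  have := (hasDerivAt_id x).mul (Real.hasDerivAt_log hx)
  refine this.congr_deriv ?_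
  field_simp; simp only [id_eq]; ring

lemma hasDerivAt_one_sub {x : ℝ} : HasDerivAt (fun y : ℝ => 1 - y) (-1) x := by
  exact ((hasDerivAt_const x (1:ℝ)).sub (hasDerivAt_id x)).congr_deriv (by ring)

lemma hasDerivAt_h {x : ℝ} (hx0 : 0 < x) (hx1 : x < 1) :
    HasDerivAt h (Real.log (1-x) - Real.log x) x := by
  have h1 := hasDerivAt_xlogx (ne_of_gt hx0)
  have h2 : HasDerivAt (fun y : ℝ => (1-y) * Real.log (1-y))
      (-(Real.log (1-x) + 1)) x := by
    have outer := hasDerivAt_xlogx (x := 1-x) (by linarith)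
    have := outer.comp x hasDerivAt_one_sub
    refine this.congr_deriv ?_
    ring
  have heq : h = fun y : ℝ => -(y * Real.log y) - (1-y) * Real.log (1-y) := by
    funext y; unfold h; ring
  rw [heq]
  refine ((h1.neg).sub h2).congr_deriv ?_
  ring

lemma hasDerivAt_L {x : ℝ} (hx0 : 0 < x) (hx1 : x < 1) :
    HasDerivAt (fun y : ℝ => Real.log y - Real.log (1-y)) (1/x + 1/(1-x)) x := by
  have l1 := Real.hasDerivAt_log (ne_of_gt hx0)
  have l2 : HasDerivAt (fun t : ℝ => Real.log (1-t)) (-(1/(1-x))) x := by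
    have := (Real.hasDerivAt_log (x := 1-x) (by linarith : (1:ℝ)-x ≠ 0)).comp x
      hasDerivAt_one_sub
    refine this.congr_deriv ?_
    field_simp
  refine (l1.sub l2).congr_deriv ?_
  have hne : (1:ℝ)-x ≠ 0 := by linarith
  field_simp; ring

/-- Key inequality: `log (x/(1-x)) ≥ 2(2x-1)` on `[1/2, 1)`. -/
lemma log_sub_log_ge {x : ℝ} (hx : 1/2 ≤ x) (hx1 : x < 1) :
    2*(2*x-1) ≤ Real.log x - Real.log (1-x) := by
  set ψ : ℝ → ℝ := fun y => Real.log y - Real.log (1-y) - (4*y-2) with hψ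
  have hd : ∀ y : ℝ, 0 < y → y < 1 → HasDerivAt ψ (1/y + 1/(1-y) - 4) y := by
    intro y hy0 hy1
    have l3 : HasDerivAt (fun t : ℝ => 4*t-2) 4 y := by
      simpa using ((hasDerivAt_id y).const_mul 4).sub_const 2
    exact (hasDerivAt_L hy0 hy1).sub l3
  have hmono : MonotoneOn ψ (Set.Ico (1/2:ℝ) 1) := by
    apply monotoneOn_of_deriv_nonneg (convex_Ico _ _)
    · intro y hy
      exact (hd y (by linarith [hy.1]) hy.2).continuousAt.continuousWithinAt
    · intro y hy
      rw [interior_Ico] at hy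
      exact (hd y (by linarith [hy.1]) hy.2).differentiableAt.differentiableWithinAt
    · intro y hy
      rw [interior_Ico] at hy
      obtain ⟨hy1, hy2⟩ := hy
      have hy0 : (0:ℝ) < y := by linarith
      rw [(hd y hy0 hy2).deriv]
      have hyne : y ≠ 0 := ne_of_gt hy0
      have h1yne : (1:ℝ)-y ≠ 0 := by linarith
      have e1 : 1/y + 1/(1-y) = 1/(y*(1-y)) := by
        field_simp; ring
      rw [e1]
      have hw : 0 < y*(1-y) := by nlinarith
      rw [sub_nonneg, le_div_iff₀ hw]
      nlinarith [sq_nonneg (y - 1/2)]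
  have h0 : ψ (1/2) = 0 := by
    norm_num [hψ]
  have := hmono (by constructor <;> norm_num) ⟨hx, hx1⟩ hx
  rw [h0] at this
  simp only [hψ] at this
  linarith

noncomputable def Phi (x : ℝ) : ℝ :=
  (Real.log x - Real.log (1-x)) * (x*(1-x))^2 / (2*x-1)

lemma hasDerivAt_Phi {x : ℝ} (hx : 1/2 < x) (hx1 : x < 1) :
    HasDerivAt Phi
      ((((1/x + 1/(1-x)) * (x*(1-x))^2 +
          (Real.log x - Real.log (1-x)) * (2*(x*(1-x))*(1-2*x))) * (2*x-1) -
        (Real.log x - Real.log (1-x)) * (x*(1-x))^2 * 2) / (2*x-1)^2) x := by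
  have hx0 : (0:ℝ) < x := by linarith
  have hbase : HasDerivAt (fun y : ℝ => y*(1-y)) (1-2*x) x := by
    have := (hasDerivAt_id x).mul hasDerivAt_one_sub
    refine this.congr_deriv ?_
    simp only [id_eq]
    ring
  have hw : HasDerivAt (fun y : ℝ => (y*(1-y))^2) (2*(x*(1-x))*(1-2*x)) x := by
    have := hbase.pow 2
    refine this.congr_deriv ?_
    ring
  have hu := (hasDerivAt_L hx0 hx1).mul hw
  have hv : HasDerivAt (fun y : ℝ => 2*y-1) 2 x := by
    simpa using ((hasDerivAt_id x).const_mul 2).sub_const 1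
  have hvne : 2*x-1 ≠ 0 := by linarith
  exact hu.div hv hvne

lemma Phi_anti : AntitoneOn Phi (Set.Ioo (1/2:ℝ) 1) := by
  apply antitoneOn_of_deriv_nonpos (convex_Ioo _ _)
  · intro y hy
    exact (hasDerivAt_Phi hy.1 hy.2).continuousAt.continuousWithinAt
  · intro y hy
    rw [interior_Ioo] at hy
    exact (hasDerivAt_Phi hy.1 hy.2).differentiableAt.differentiableWithinAt
  · intro y hy
    rw [interior_Ioo] at hy
    obtain ⟨hy1, hy2⟩ := hy
    have hy0 : (0:ℝ) < y := by linarith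
    have h1y : (0:ℝ) < 1-y := by linarith
    rw [(hasDerivAt_Phi hy1 hy2).deriv]
    apply div_nonpos_of_nonpos_of_nonneg _ (sq_nonneg _)
    set L := Real.log y - Real.log (1-y) with hL
    have hA : 2*(2*y-1) ≤ L := log_sub_log_ge (le_of_lt hy1) hy2
    have e1 : (1/y + 1/(1-y)) * (y*(1-y))^2 = y*(1-y) := by
      field_simp
      ring
    rw [e1]
    have hym : (0:ℝ) < 2*y-1 := by linarith
    nlinarith [mul_nonneg (mul_nonneg (sub_nonneg.2 hA) (le_of_lt (mul_pos hy0 h1y)))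
        (by nlinarith : (0:ℝ) ≤ (2*y-1)^2 + y*(1-y)),
      mul_nonneg (le_of_lt (mul_pos hy0 h1y))
        (le_of_lt (mul_pos hym (mul_pos hym hym)))]

theorem entropic_ineq (q : ℝ) (hq : 1/2 < q) (hq1 : q < 1) (z : ℝ)
    (hz : 1/2 ≤ z) (hzq : z ≤ q) :
    (-Real.log (q/(1-q))) / (-(2*q-1)/(q^2*(1-q)^2)) *
      ((-(1/(z*(1-z)))) - (-(1/(q*(1-q))))) ≤ h z - h q := by
  have hq0 : (0:ℝ) < q := by linarith
  have h1q : (0:ℝ) < 1-q := by linarith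
  have hqm : (2:ℝ)*q-1 ≠ 0 := by linarith
  have hc : (-Real.log (q/(1-q))) / (-(2*q-1)/(q^2*(1-q)^2)) = Phi q := by
    unfold Phi
    rw [Real.log_div (ne_of_gt hq0) (ne_of_gt h1q), div_div_eq_mul_div,
      div_eq_div_iff (neg_ne_zero.mpr hqm) hqm]
    ring
  rw [hc]
  set c := Phi q with hcdef
  set F : ℝ → ℝ := fun x => h x + c * (x*(1-x))⁻¹ with hF
  have hFd : ∀ x : ℝ, 0 < x → x < 1 →
      HasDerivAt F (Real.log (1-x) - Real.log x + c * (-(1-2*x)/(x*(1-x))^2)) x := by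
    intro x hx0 hx1
    have hbase : HasDerivAt (fun y : ℝ => y*(1-y)) (1-2*x) x := by
      have := (hasDerivAt_id x).mul hasDerivAt_one_sub
      refine this.congr_deriv ?_
      simp only [id_eq]
      ring
    have hwne : x*(1-x) ≠ 0 := ne_of_gt (mul_pos hx0 (by linarith))
    have hinv := (hbase.inv hwne).const_mul c
    have := (hasDerivAt_h hx0 hx1).add hinv
    exact this
  have hanti : AntitoneOn F (Set.Icc (1/2:ℝ) q) := by
    apply antitoneOn_of_deriv_nonpos (convex_Icc _ _)
    · intro y hy
      exact (hFd y (by linarith [hy.1]) (by linarith [hy.2])).continuousAt.continuousWithinAt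
    · intro y hy
      rw [interior_Icc] at hy
      exact (hFd y (by linarith [hy.1]) (by linarith [hy.2])).differentiableAt.differentiableWithinAt
    · intro y hy
      rw [interior_Icc] at hy
      obtain ⟨hy1, hy2⟩ := hy
      have hy0 : (0:ℝ) < y := by linarith
      have hyl1 : y < 1 := by linarith
      have h1y : (0:ℝ) < 1-y := by linarith
      rw [(hFd y hy0 hyl1).deriv]
      have hPhi : Phi q ≤ Phi y := Phi_anti ⟨hy1, hyl1⟩ ⟨hq, hq1⟩ (le_of_lt hy2)
      have hym : (0:ℝ) < 2*y-1 := by linarith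
      have hymne : (2:ℝ)*y-1 ≠ 0 := ne_of_gt hym
      have h1 : c * (2*y-1) ≤ Phi y * (2*y-1) :=
        mul_le_mul_of_nonneg_right hPhi (le_of_lt hym)
      have h2 : Phi y * (2*y-1) = (Real.log y - Real.log (1-y)) * (y*(1-y))^2 := by
        unfold Phi
        field_simp; exact mul_div_cancel_right₀ _ (by linarith)
      have hw2 : (0:ℝ) < (y*(1-y))^2 := by positivity
      have h3 : c * (-(1-2*y)/(y*(1-y))^2) ≤ Real.log y - Real.log (1-y) := by
        have e2 : c * (-(1-2*y)/(y*(1-y))^2) = (c*(2*y-1))/((y*(1-y))^2) := by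
          ring
        rw [e2, div_le_iff₀ hw2]
        calc c * (2*y-1) ≤ Phi y * (2*y-1) := h1
          _ = (Real.log y - Real.log (1-y)) * (y*(1-y))^2 := h2
      linarith
  have hFF : F q ≤ F z := hanti ⟨hz, hzq⟩ ⟨le_of_lt hq, le_refl q⟩ hzq
  simp only [hF] at hFF
  have expand : c * ((-(1/(z*(1-z)))) - (-(1/(q*(1-q))))) =
      c * (q*(1-q))⁻¹ - c * (z*(1-z))⁻¹ := by
    ring
  rw [expand]
  linarith
end

section
/- For ν ∈ (0,1), θ ∈ (0,1), let q = (1+ν)/2, z = qθ + (1-q)(1-θ), T = (q·log(q/(1-q)))⁻¹. Then the one-step bound ν·(b(1-θ) + (1-a)θ) ≤ T·(h(z) - h(q)) holds, where b = (1-ν)θ/((1-ν)θ + (1+ν)(1-θ)), a = (1+ν)θ/((1+ν)θ + (1-ν)(1-θ)), and h is the binary entropy function. -/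
open Real

private lemma artanh_lower {u : ℝ} (hu0 : 0 ≤ u) (hu1 : u < 1) :
    2*u ≤ Real.log (1+u) - Real.log (1-u) := by
  have key : MonotoneOn (fun t : ℝ => Real.log (1+t) - Real.log (1-t) - 2*t)
      (Set.Icc 0 u) := by
    apply monotoneOn_of_hasDerivWithinAt_nonneg (f' := fun t => (1+t)⁻¹ + (1-t)⁻¹ - 2)
      (convex_Icc 0 u)
    · apply ContinuousOn.sub (ContinuousOn.sub ?_ ?_) (by fun_prop)
      · apply ContinuousOn.log (by fun_prop)
        intro t ht; simp only [Set.mem_Icc] at ht; nlinarith [ht.1]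
      · apply ContinuousOn.log (by fun_prop)
        intro t ht; simp only [Set.mem_Icc] at ht
        nlinarith [ht.2]
    · intro t ht
      rw [interior_Icc] at ht
      obtain ⟨ht0, htu⟩ := ht
      have h1 : (0:ℝ) < 1 + t := by linarith
      have h2 : (0:ℝ) < 1 - t := by linarith
      have d1 : HasDerivAt (fun t : ℝ => Real.log (1+t)) ((1+t)⁻¹) t := by
        have := ((hasDerivAt_id t).const_add 1).log h1.ne'
        simpa using this
      have d2 : HasDerivAt (fun t : ℝ => Real.log (1-t)) (-(1-t)⁻¹) t := by
        have := ((hasDerivAt_id t).const_sub 1).log h2.ne'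
        simpa [neg_div, div_eq_mul_inv] using this
      have d3 : HasDerivAt (fun t : ℝ => Real.log (1+t) - Real.log (1-t) - 2*t)
          ((1+t)⁻¹ + (1-t)⁻¹ - 2) t := by
        have := (d1.fun_sub d2).fun_sub ((hasDerivAt_id t).const_mul 2)
        simpa [sub_neg_eq_add, mul_comm] using this
      exact d3.hasDerivWithinAt
    · intro t ht
      rw [interior_Icc] at ht
      obtain ⟨ht0, htu⟩ := ht
      have h1 : (0:ℝ) < 1 + t := by linarith
      have h2 : (0:ℝ) < 1 - t := by linarith
      have e : (1+t)⁻¹ + (1-t)⁻¹ - 2 = 2*t^2/((1+t)*(1-t)) := by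
        field_simp; ring
      rw [e]; positivity
  have h0 : (0:ℝ) ∈ Set.Icc (0:ℝ) u := ⟨le_refl 0, hu0⟩
  have hu : u ∈ Set.Icc (0:ℝ) u := ⟨hu0, le_refl u⟩
  have := key h0 hu hu0
  simp at this
  linarith

noncomputable def mm (z : ℝ) : ℝ :=
  (Real.log z - Real.log (1-z)) * (z*(1-z))^2 / (2*z-1)

noncomputable def mm' (z : ℝ) : ℝ :=
  (((z⁻¹ + (1-z)⁻¹) * (z*(1-z))^2
      + (Real.log z - Real.log (1-z)) * (2*(z*(1-z))*(1-2*z))) * (2*z-1)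
    - (Real.log z - Real.log (1-z)) * (z*(1-z))^2 * 2) / (2*z-1)^2

private lemma mm_hasDerivAt {z : ℝ} (h0 : 1/2 < z) (h1 : z < 1) :
    HasDerivAt mm (mm' z) z := by
  have hz0 : (0:ℝ) < z := by linarith
  have hz1 : (0:ℝ) < 1 - z := by linarith
  have h2z : 2*z - 1 ≠ 0 := by intro hc; linarith [hc]
  have dφ : HasDerivAt (fun x : ℝ => Real.log x - Real.log (1-x)) (z⁻¹ + (1-z)⁻¹) z := by
    have d2 : HasDerivAt (fun x : ℝ => Real.log (1-x)) (-(1-z)⁻¹) z := by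
      have := ((hasDerivAt_id z).const_sub 1).log hz1.ne'
      simpa [neg_div, div_eq_mul_inv] using this
    have := (Real.hasDerivAt_log hz0.ne').fun_sub d2
    simpa [sub_neg_eq_add] using this
  have dp : HasDerivAt (fun x : ℝ => x*(1-x)) (1-2*z) z := by
    have := (hasDerivAt_id z).fun_mul ((hasDerivAt_id z).const_sub 1)
    refine this.congr_deriv ?_; simp only [id_eq]; ring
  have dp2 : HasDerivAt (fun x : ℝ => (x*(1-x))^2) (2*(z*(1-z))*(1-2*z)) z := by
    have := dp.fun_pow 2
    refine this.congr_deriv ?_; ring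
  have dN := dφ.mul dp2
  have dden : HasDerivAt (fun x : ℝ => 2*x-1) 2 z := by
    have := ((hasDerivAt_id z).const_mul 2).sub_const 1
    simpa using this
  have := dN.div dden h2z
  exact this

private lemma mm'_nonpos {z : ℝ} (h0 : 1/2 < z) (h1 : z < 1) : mm' z ≤ 0 := by
  have hz0 : (0:ℝ) < z := by linarith
  have hz1 : (0:ℝ) < 1 - z := by linarith
  have hu0 : (0:ℝ) ≤ 2*z - 1 := by linarith
  have hφ : 2*(2*z-1) ≤ Real.log z - Real.log (1-z) := by
    have := artanh_lower (u := 2*z-1) hu0 (by linarith)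
    rw [show (1:ℝ)+(2*z-1) = 2*z by ring, show (1:ℝ)-(2*z-1) = 2*(1-z) by ring] at this
    rw [Real.log_mul two_ne_zero hz0.ne', Real.log_mul two_ne_zero hz1.ne'] at this
    linarith
  set φ := Real.log z - Real.log (1-z) with hφdef
  have hp : (0:ℝ) < z*(1-z) := mul_pos hz0 hz1
  have hp4 : z*(1-z) ≤ 1/4 := by nlinarith [sq_nonneg (2*z-1)]
  have e1 : (z⁻¹ + (1-z)⁻¹) * (z*(1-z))^2 = z*(1-z) := by
    field_simp [hz0.ne', hz1.ne']; ring
  unfold mm'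
  rw [e1]
  apply div_nonpos_of_nonpos_of_nonneg _ (sq_nonneg _)
  have hnum : (z*(1-z) + φ * (2*(z*(1-z))*(1-2*z))) * (2*z-1) - φ * (z*(1-z))^2 * 2
      = (z*(1-z)) * ((2*z-1) - 2*φ*(1 - 3*(z*(1-z)))) := by ring
  rw [hnum]
  apply mul_nonpos_of_nonneg_of_nonpos hp.le
  have h3p : (1:ℝ)/4 ≤ 1 - 3*(z*(1-z)) := by linarith
  nlinarith [mul_le_mul_of_nonneg_right hφ (by linarith : (0:ℝ) ≤ 1 - 3*(z*(1-z))),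
    mul_le_mul_of_nonneg_left h3p hu0]

private lemma mm_antitone : AntitoneOn mm (Set.Ioo (1/2 : ℝ) 1) := by
  apply antitoneOn_of_hasDerivWithinAt_nonpos (f' := mm') (convex_Ioo _ _)
  · exact fun z hz => (mm_hasDerivAt hz.1 hz.2).continuousAt.continuousWithinAt
  · rw [interior_Ioo]
    exact fun z hz => (mm_hasDerivAt hz.1 hz.2).hasDerivWithinAt
  · rw [interior_Ioo]
    exact fun z hz => mm'_nonpos hz.1 hz.2

private lemma hasDerivAt_h_s17 {z : ℝ} (h0 : 0 < z) (h1 : z < 1) :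
    HasDerivAt h (Real.log (1-z) - Real.log z) z := by
  have h2 : (0:ℝ) < 1 - z := by linarith
  have d1 : HasDerivAt (fun x : ℝ => x * Real.log x) (Real.log z + 1) z := by
    have := (hasDerivAt_id z).fun_mul (Real.hasDerivAt_log h0.ne')
    refine this.congr_deriv ?_
    simp [mul_inv_cancel₀ h0.ne']
  have d2 : HasDerivAt (fun x : ℝ => (1-x) * Real.log (1-x)) (-(Real.log (1-z) + 1)) z := by
    have inner : HasDerivAt (fun x : ℝ => 1 - x) (-1 : ℝ) z := (hasDerivAt_id z).const_sub 1
    have outer : HasDerivAt (fun y : ℝ => y * Real.log y) (Real.log (1-z) + 1) (1-z) := by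
      have := (hasDerivAt_id (1-z)).fun_mul (Real.hasDerivAt_log h2.ne')
      refine this.congr_deriv ?_
      simp [mul_inv_cancel₀ h2.ne']
    have := outer.comp z inner
    refine this.congr_deriv ?_
    ring
  have e : h = fun x : ℝ => -(x*Real.log x) - (1-x)*Real.log (1-x) := by
    funext x; unfold h; ring
  rw [e]
  have := (d1.fun_neg).fun_sub d2
  refine this.congr_deriv ?_
  ring

private lemma f_antitone {q : ℝ} (hq : 1/2 < q) (hq1 : q < 1) :
    AntitoneOn (fun z : ℝ => h z + mm q * (z*(1-z))⁻¹) (Set.Icc (1/2 : ℝ) q) := by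
  have hmemb : ∀ z ∈ Set.Icc (1/2:ℝ) q, (0:ℝ) < z ∧ z < 1 := by
    intro z hz
    exact ⟨by linarith [hz.1], by linarith [hz.2]⟩
  have dg : ∀ z, 0 < z → z < 1 → HasDerivAt (fun z : ℝ => h z + mm q * (z*(1-z))⁻¹)
      ((Real.log (1-z) - Real.log z) + mm q * (-(1-2*z)/(z*(1-z))^2)) z := by
    intro z h0 h1
    have hz1 : (0:ℝ) < 1 - z := by linarith
    have hp : (0:ℝ) < z*(1-z) := mul_pos h0 hz1
    have dp : HasDerivAt (fun x : ℝ => x*(1-x)) (1-2*z) z := by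
      have := (hasDerivAt_id z).fun_mul ((hasDerivAt_id z).const_sub 1)
      refine this.congr_deriv ?_; simp only [id_eq]; ring
    have dinv : HasDerivAt (fun x : ℝ => (x*(1-x))⁻¹) (-(1-2*z)/(z*(1-z))^2) z :=
      dp.inv hp.ne'
    exact (hasDerivAt_h_s17 h0 h1).add (dinv.const_mul (mm q))
  apply antitoneOn_of_hasDerivWithinAt_nonpos
    (f' := fun z => (Real.log (1-z) - Real.log z) + mm q * (-(1-2*z)/(z*(1-z))^2))
    (convex_Icc _ _)
  · intro z hz
    obtain ⟨h0, h1⟩ := hmemb z hz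
    exact (dg z h0 h1).continuousAt.continuousWithinAt
  · rw [interior_Icc]
    intro z hz
    have : (0:ℝ) < z ∧ z < 1 := ⟨by linarith [hz.1], by linarith [hz.2, hq1]⟩
    exact (dg z this.1 this.2).hasDerivWithinAt
  · rw [interior_Icc]
    intro z hz
    obtain ⟨hz1, hz2⟩ := hz
    have h0 : (0:ℝ) < z := by linarith
    have h1 : z < 1 := by linarith
    have hz1' : (0:ℝ) < 1 - z := by linarith
    have hp : (0:ℝ) < z*(1-z) := mul_pos h0 hz1'
    have hp2 : (0:ℝ) < (z*(1-z))^2 := by positivity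
    have h2z : (0:ℝ) < 2*z - 1 := by linarith
    -- mm q ≤ mm z
    have hmm : mm q ≤ mm z :=
      mm_antitone ⟨hz1, h1⟩ ⟨hq, hq1⟩ hz2.le
    have hmz : mm z * (2*z-1) = (Real.log z - Real.log (1-z)) * (z*(1-z))^2 := by
      unfold mm; rw [div_mul_cancel₀ _ h2z.ne']
    have key : mm q * (2*z-1) ≤ (Real.log z - Real.log (1-z)) * (z*(1-z))^2 := by
      rw [← hmz]
      exact mul_le_mul_of_nonneg_right hmm h2z.le
    have h2 : mm q * (-(1-2*z)/(z*(1-z))^2) ≤ Real.log z - Real.log (1-z) := by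
      rw [show -(1-2*z) = 2*z-1 by ring, mul_div_assoc', div_le_iff₀ hp2]
      exact key
    linarith

private lemma h_sym (x : ℝ) : h (1-x) = h x := by
  unfold h
  rw [show (1:ℝ)-(1-x) = x by ring]
  ring

private lemma entropy_bound {q z : ℝ} (hq : 1/2 < q) (hq1 : q < 1)
    (hz1 : 1-q ≤ z) (hz2 : z ≤ q) :
    mm q/(q*(1-q)) - mm q/(z*(1-z)) ≤ h z - h q := by
  have base : ∀ w, 1/2 ≤ w → w ≤ q →
      mm q/(q*(1-q)) - mm q/(w*(1-w)) ≤ h w - h q := by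
    intro w hw1 hw2
    have := f_antitone hq hq1 ⟨hw1, hw2⟩ ⟨hq.le, le_refl q⟩ hw2
    simp only [div_eq_mul_inv]
    linarith [this]
  rcases le_or_gt (1/2) z with hc | hc
  · exact base z hc hz2
  · have := base (1-z) (by linarith) (by linarith)
    rw [h_sym, show (1:ℝ)-(1-z) = z by ring] at this
    rw [show (1-z)*z = z*(1-z) by ring] at this
    exact this

set_option maxHeartbeats 1000000 in
theorem one_step_bound (ν θ : ℝ) (hν : 0 < ν) (hν1 : ν < 1)
    (hθ0 : 0 < θ) (hθ1 : θ < 1) :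
    ν * (((1-ν)*θ/((1-ν)*θ + (1+ν)*(1-θ))) * (1-θ)
        + (1 - (1+ν)*θ/((1+ν)*θ + (1-ν)*(1-θ))) * θ)
    ≤ (((1+ν)/2) * Real.log (((1+ν)/2)/(1-(1+ν)/2)))⁻¹ *
        (h (((1+ν)/2)*θ + (1-(1+ν)/2)*(1-θ)) - h ((1+ν)/2)) := by
  have hq : (1:ℝ)/2 < (1+ν)/2 := by linarith
  have hq1 : (1+ν)/2 < 1 := by linarith
  have hq0 : (0:ℝ) < (1+ν)/2 := by linarith
  have h1q : (0:ℝ) < 1 - (1+ν)/2 := by linarith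
  have hz1 : 1-(1+ν)/2 ≤ (1+ν)/2*θ + (1-(1+ν)/2)*(1-θ) := by nlinarith
  have hz2 : (1+ν)/2*θ + (1-(1+ν)/2)*(1-θ) ≤ (1+ν)/2 := by nlinarith
  have hz0 : (0:ℝ) < (1+ν)/2*θ + (1-(1+ν)/2)*(1-θ) := lt_of_lt_of_le h1q hz1
  have hz1' : (0:ℝ) < 1 - ((1+ν)/2*θ + (1-(1+ν)/2)*(1-θ)) := by nlinarith
  have EB := entropy_bound hq hq1 hz1 hz2
  have hLq : 0 < Real.log ((1+ν)/2) - Real.log (1-(1+ν)/2) := by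
    rw [← Real.log_div hq0.ne' h1q.ne']
    apply Real.log_pos
    rw [lt_div_iff₀ h1q]; linarith
  rw [show Real.log (((1+ν)/2)/(1-(1+ν)/2))
      = Real.log ((1+ν)/2) - Real.log (1-(1+ν)/2) from Real.log_div hq0.ne' h1q.ne']
  have hpos : (0:ℝ) < (((1+ν)/2) * (Real.log ((1+ν)/2) - Real.log (1-(1+ν)/2)))⁻¹ := by
    positivity
  have step := mul_le_mul_of_nonneg_left EB hpos.le
  have hZZ : ((1+ν)/2*θ + (1-(1+ν)/2)*(1-θ)) * (1 - ((1+ν)/2*θ + (1-(1+ν)/2)*(1-θ))) ≠ 0 :=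
    (mul_pos hz0 hz1').ne'
  have ha : ((1+ν)/2)*(1-(1+ν)/2) ≠ 0 := (mul_pos hq0 h1q).ne'
  have hmm_val : mm ((1+ν)/2)
      = (Real.log ((1+ν)/2) - Real.log (1-(1+ν)/2)) * (((1+ν)/2)*(1-(1+ν)/2))^2 / ν := by
    unfold mm
    rw [show 2*((1+ν)/2)-1 = ν from by ring]
  have hmid : mm ((1+ν)/2)/(((1+ν)/2)*(1-(1+ν)/2))
        - mm ((1+ν)/2)/(((1+ν)/2*θ + (1-(1+ν)/2)*(1-θ)) * (1 - ((1+ν)/2*θ + (1-(1+ν)/2)*(1-θ))))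
      = ((Real.log ((1+ν)/2) - Real.log (1-(1+ν)/2)) * (((1+ν)/2)*(1-(1+ν)/2)) * ν * (θ*(1-θ)))
          / (((1+ν)/2*θ + (1-(1+ν)/2)*(1-θ)) * (1 - ((1+ν)/2*θ + (1-(1+ν)/2)*(1-θ)))) := by
    rw [hmm_val, div_div, div_div,
        div_sub_div _ _ (mul_ne_zero hν.ne' ha) (mul_ne_zero hν.ne' hZZ),
        div_eq_div_iff (mul_ne_zero (mul_ne_zero hν.ne' ha) (mul_ne_zero hν.ne' hZZ)) hZZ]
    ring
  refine le_trans (le_of_eq ?_) step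
  rw [hmid, ← mul_div_assoc]
  have hco : (((1+ν)/2) * (Real.log ((1+ν)/2) - Real.log (1-(1+ν)/2)))⁻¹ *
        ((Real.log ((1+ν)/2) - Real.log (1-(1+ν)/2)) * (((1+ν)/2)*(1-(1+ν)/2)) * ν * (θ*(1-θ)))
      = (1-(1+ν)/2) * ν * (θ*(1-θ)) := by
    rw [inv_mul_eq_div, div_eq_iff (mul_ne_zero hq0.ne' hLq.ne')]
    ring
  rw [hco, eq_div_iff hZZ]
  have hD1 : (0:ℝ) < (1-ν)*θ + (1+ν)*(1-θ) := by nlinarith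
  have hD2 : (0:ℝ) < (1+ν)*θ + (1-ν)*(1-θ) := by nlinarith
  field_simp [hD1.ne', hD2.ne', (by nlinarith : (0:ℝ) < θ * (1 + ν) + (1 - ν) * (1 - θ)).ne']
  ring
end
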